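/- For each n ≥ 2 let c_n, d_n > 0 with c_n, d_n = o(log n), p_n = c_n/n ∈ (0,1), q_n = d_n/n ∈ (0,1), let the prior on Θ_n be uniform, let θ_n ∈ Θ_n, and let a_n ∈ (0, 1/2) satisfy a_n → 0 and a_n·n → ∞. If there is a constant C > 1 such that (√c_n − √d_n)² + 4C·log(a_n) → ∞ as n → ∞, then P_{θ_n} Π(B_n(θ_n, ⌈a_n·n⌉) | X^n) → 1, i.e. the posterior recovers the community assignments almost-exactly with error rate k_n = ⌈a_n·n⌉. -/

import Mathlib

open Finset Real Filter

/-- The set of potential edges of an `n`-vertex graph: pairs `(i,j)` with `i < j`. -/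
abbrev Edge (n : ℕ) := {e : Fin n × Fin n // e.1 < e.2}

/-- An observed graph: an edge indicator for each potential edge. -/
abbrev ObsGraph (n : ℕ) := Edge n → Bool

/-- Edge probability under assignment `θ`: `p` within communities, `q` between. -/
noncomputable def edgeProb {n : ℕ} (p q : ℝ) (θ : Fin n → Bool) (e : Edge n) : ℝ :=
  if θ e.val.1 = θ e.val.2 then p else q

/-- Probability mass function of the observed graph under `θ`. -/
noncomputable def graphPMF {n : ℕ} (p q : ℝ) (θ : Fin n → Bool) (x : ObsGraph n) : ℝ :=
  ∏ e : Edge n, if x e then edgeProb p q θ e else 1 - edgeProb p q θ e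

/-- Hellinger affinity of Bernoulli parameters. -/
noncomputable def rho (p q : ℝ) : ℝ := Real.sqrt (p * q) + Real.sqrt ((1 - p) * (1 - q))

/-- Edges whose probability changes from `p` to `q` when replacing `θ` by `η`. -/
def D1 {n : ℕ} (θ η : Fin n → Bool) : Finset (Fin n × Fin n) :=
  Finset.univ.filter fun e => e.1 < e.2 ∧ θ e.1 = θ e.2 ∧ η e.1 ≠ η e.2

/-- Edges whose probability changes from `q` to `p` when replacing `θ` by `η`. -/
def D2 {n : ℕ} (θ η : Fin n → Bool) : Finset (Fin n × Fin n) :=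
  Finset.univ.filter fun e => e.1 < e.2 ∧ θ e.1 ≠ θ e.2 ∧ η e.1 = η e.2

/-- Hamming distance. -/
def hdist {n : ℕ} (θ η : Fin n → Bool) : ℕ := (Finset.univ.filter fun i => θ i ≠ η i).card

/-- The metric `k(θ,η) = h(θ,η) ∧ (n - h(θ,η))`. -/
def kdist {n : ℕ} (θ η : Fin n → Bool) : ℕ := min (hdist θ η) (n - hdist θ η)

/-- Size of the smallest community. -/
def countOnes {n : ℕ} (θ : Fin n → Bool) : ℕ := (Finset.univ.filter fun i => θ i = true).card

/-- The parameter space `Θ_n`. -/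
def Theta (n : ℕ) : Finset (Fin n → Bool) :=
  Finset.univ.filter fun θ => 2 * countOnes θ ≤ n ∧
    ∀ i : Fin n, 2 * countOnes θ = n → (i : ℕ) = 0 → θ i = false

/-- Posterior mass of `A ⊆ Θ_n` given data `x`, under prior mass function `π`. -/
noncomputable def postMass {n : ℕ} (p q : ℝ) (pri : (Fin n → Bool) → ℝ)
    (A : Finset (Fin n → Bool)) (x : ObsGraph n) : ℝ :=
  (∑ η ∈ A, pri η * graphPMF p q η x) / (∑ η ∈ Theta n, pri η * graphPMF p q η x)

/-- `P_θ`-expectation of the posterior mass of `A`. -/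
noncomputable def expPostMass {n : ℕ} (p q : ℝ) (pri : (Fin n → Bool) → ℝ)
    (θ : Fin n → Bool) (A : Finset (Fin n → Bool)) : ℝ :=
  ∑ x : ObsGraph n, graphPMF p q θ x * postMass p q pri A x

/-- The uniform prior on `Θ_n`. -/
noncomputable def unifPrior (n : ℕ) : (Fin n → Bool) → ℝ := fun _ => ((2:ℝ) ^ (n - 1))⁻¹

/-- Hamming ball `B_n(θ,k)` inside `Θ_n`. -/
def hball {n : ℕ} (θ : Fin n → Bool) (k : ℕ) : Finset (Fin n → Bool) :=
  (Theta n).filter fun η => kdist η θ ≤ k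


section Basic
variable {n : ℕ}

lemma edgeProb_mem {p q : ℝ} (hp : p ∈ Set.Icc (0:ℝ) 1) (hq : q ∈ Set.Icc (0:ℝ) 1)
    (θ : Fin n → Bool) (e : Edge n) : edgeProb p q θ e ∈ Set.Icc (0:ℝ) 1 := by
  unfold edgeProb; split <;> assumption

lemma graphPMF_pos {p q : ℝ} (hp : p ∈ Set.Ioo (0:ℝ) 1) (hq : q ∈ Set.Ioo (0:ℝ) 1)
    (θ : Fin n → Bool) (x : ObsGraph n) : 0 < graphPMF p q θ x := by
  refine Finset.prod_pos fun e _ => ?_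
  have h : edgeProb p q θ e ∈ Set.Ioo (0:ℝ) 1 := by unfold edgeProb; split <;> assumption
  split
  · exact h.1
  · linarith [h.2]

lemma graphPMF_nonneg {p q : ℝ} (hp : p ∈ Set.Icc (0:ℝ) 1) (hq : q ∈ Set.Icc (0:ℝ) 1)
    (θ : Fin n → Bool) (x : ObsGraph n) : 0 ≤ graphPMF p q θ x := by
  refine Finset.prod_nonneg fun e _ => ?_
  have h := edgeProb_mem hp hq θ e
  split
  · exact h.1
  · linarith [h.2]

lemma sum_graphPMF (p q : ℝ) (θ : Fin n → Bool) :
    ∑ x : ObsGraph n, graphPMF p q θ x = 1 := by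
  unfold graphPMF
  rw [← Fintype.piFinset_univ, ← Finset.prod_univ_sum (fun _ : Edge n => (Finset.univ : Finset Bool))
    (fun e b => if b then edgeProb p q θ e else 1 - edgeProb p q θ e)]
  simp

end Basic
section Hell
variable {n : ℕ}

/-- Edges whose probability changes when replacing `θ` by `η`. -/
def changedE (θ η : Fin n → Bool) : Finset (Edge n) :=
  Finset.univ.filter fun e => ¬((θ e.val.1 = θ e.val.2) ↔ (η e.val.1 = η e.val.2))

lemma rho_nonneg (p q : ℝ) : 0 ≤ rho p q := by
  unfold rho; positivity

lemma rho_self {A : ℝ} (hA : A ∈ Set.Icc (0:ℝ) 1) : rho A A = 1 := by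
  unfold rho
  rw [Real.sqrt_mul_self hA.1, Real.sqrt_mul_self (by linarith [hA.2] : (0:ℝ) ≤ 1 - A)]
  ring

lemma rho_comm (p q : ℝ) : rho p q = rho q p := by
  unfold rho; rw [mul_comm, mul_comm (1-p)]

lemma sqrt_prod {ι : Type*} {s : Finset ι} {f : ι → ℝ} (h : ∀ i ∈ s, 0 ≤ f i) :
    Real.sqrt (∏ i ∈ s, f i) = ∏ i ∈ s, Real.sqrt (f i) := by
  induction s using Finset.cons_induction with
  | empty => simp
  | cons a s ha ih =>
    rw [Finset.prod_cons, Finset.prod_cons,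
      Real.sqrt_mul (h a (Finset.mem_cons_self a s)),
      ih fun i hi => h i (Finset.mem_cons_of_mem hi)]

lemma hellinger_eq {p q : ℝ} (hp : p ∈ Set.Icc (0:ℝ) 1) (hq : q ∈ Set.Icc (0:ℝ) 1)
    (θ η : Fin n → Bool) :
    ∑ x : ObsGraph n, Real.sqrt (graphPMF p q θ x * graphPMF p q η x)
      = rho p q ^ (changedE θ η).card := by
  have key : ∀ x : ObsGraph n, Real.sqrt (graphPMF p q θ x * graphPMF p q η x)
      = ∏ e : Edge n, Real.sqrt ((if x e then edgeProb p q θ e else 1 - edgeProb p q θ e) *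
          (if x e then edgeProb p q η e else 1 - edgeProb p q η e)) := by
    intro x
    unfold graphPMF
    rw [← Finset.prod_mul_distrib]
    refine sqrt_prod fun e _ => ?_
    have h1 := edgeProb_mem hp hq θ e
    have h2 := edgeProb_mem hp hq η e
    have : ∀ A : ℝ, A ∈ Set.Icc (0:ℝ) 1 → 0 ≤ (if x e then A else 1 - A) := by
      intro A hA; split; exact hA.1; linarith [hA.2]
    exact mul_nonneg (this _ h1) (this _ h2)
  simp only [key]
  rw [← Fintype.piFinset_univ, ← Finset.prod_univ_sum (fun _ : Edge n => (Finset.univ : Finset Bool))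
    (fun e b => Real.sqrt ((if b then edgeProb p q θ e else 1 - edgeProb p q θ e) *
      (if b then edgeProb p q η e else 1 - edgeProb p q η e)))]
  have sumb : ∀ A B : ℝ, (∑ b : Bool, Real.sqrt ((if b then A else 1-A) * (if b then B else 1-B)))
      = rho A B := by
    intro A B
    rw [Fintype.sum_bool, if_pos rfl, if_pos rfl, if_neg (by simp), if_neg (by simp)]
    rfl
  have perEdge : ∀ e : Edge n,
      (∑ b : Bool, Real.sqrt ((if b then edgeProb p q θ e else 1 - edgeProb p q θ e) *
          (if b then edgeProb p q η e else 1 - edgeProb p q η e)))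
      = if ¬((θ e.val.1 = θ e.val.2) ↔ (η e.val.1 = η e.val.2)) then rho p q else 1 := by
    intro e
    rw [sumb]
    unfold edgeProb
    by_cases h1 : θ e.val.1 = θ e.val.2 <;> by_cases h2 : η e.val.1 = η e.val.2
    · rw [if_pos h1, if_pos h2, if_neg (by tauto), rho_self hp]
    · rw [if_pos h1, if_neg h2, if_pos (by tauto)]
    · rw [if_neg h1, if_pos h2, if_pos (by tauto), rho_comm]
    · rw [if_neg h1, if_neg h2, if_neg (by tauto), rho_self hq]
  rw [Finset.prod_congr rfl fun e _ => perEdge e, Finset.prod_ite, Finset.prod_const,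
    Finset.prod_const_one, mul_one]
  congr 1

end Hell
section Comb
variable {n : ℕ}

lemma mem_changedE {θ η : Fin n → Bool} {e : Edge n} :
    e ∈ changedE θ η ↔ ((θ e.val.1 ≠ η e.val.1) ↔ (θ e.val.2 = η e.val.2)) := by
  obtain ⟨⟨i, j⟩, hij⟩ := e
  simp only [changedE, Finset.mem_filter, Finset.mem_univ, true_and]
  cases hθi : θ i <;> cases hθj : θ j <;> cases hηi : η i <;> cases hηj : η j <;> simp

lemma card_changedE (θ η : Fin n → Bool) :
    (changedE θ η).card = hdist θ η * (n - hdist θ η) := by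
  classical
  set S : Finset (Fin n) := Finset.univ.filter fun i => θ i ≠ η i with hS
  have hmemS : ∀ i, i ∈ S ↔ θ i ≠ η i := by
    intro i; simp [hS]
  have hcard : (S ×ˢ Sᶜ).card = hdist θ η * (n - hdist θ η) := by
    rw [Finset.card_product, Finset.card_compl, Fintype.card_fin]
    rfl
  rw [← hcard]
  apply Finset.card_bij (fun (e : Edge n) _ =>
    if e.val.1 ∈ S then (e.val.1, e.val.2) else (e.val.2, e.val.1))
  · -- maps to
    intro e he
    rw [mem_changedE] at he
    by_cases h1 : e.val.1 ∈ S
    · rw [if_pos h1, Finset.mem_product, Finset.mem_compl]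
      refine ⟨h1, fun h2 => ?_⟩
      exact ((hmemS _).mp h2) (he.mp ((hmemS _).mp h1))
    · rw [if_neg h1, Finset.mem_product, Finset.mem_compl]
      refine ⟨(hmemS _).mpr fun h2 => ?_, h1⟩
      exact h1 ((hmemS _).mpr (he.mpr h2))
  · -- injective
    intro e1 h1 e2 h2 heq
    apply Subtype.ext
    by_cases c1 : e1.val.1 ∈ S <;> by_cases c2 : e2.val.1 ∈ S
    · rw [if_pos c1, if_pos c2] at heq
      exact Prod.ext (congrArg Prod.fst heq) (congrArg Prod.snd heq)
    · rw [if_pos c1, if_neg c2] at heq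
      have a1 : e1.val.1 = e2.val.2 := congrArg Prod.fst heq
      have a2 : e1.val.2 = e2.val.1 := congrArg Prod.snd heq
      exact absurd (a1 ▸ a2 ▸ e1.property) (by have := e2.property; omega)
    · rw [if_neg c1, if_pos c2] at heq
      have a1 : e1.val.2 = e2.val.1 := congrArg Prod.fst heq
      have a2 : e1.val.1 = e2.val.2 := congrArg Prod.snd heq
      exact absurd (a1 ▸ a2 ▸ e1.property) (by have := e2.property; omega)
    · rw [if_neg c1, if_neg c2] at heq
      have a1 : e1.val.2 = e2.val.2 := congrArg Prod.fst heq
      have a2 : e1.val.1 = e2.val.1 := congrArg Prod.snd heq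
      exact Prod.ext a2 a1
  · -- surjective
    intro st hst
    rw [Finset.mem_product, Finset.mem_compl] at hst
    obtain ⟨hs, ht⟩ := hst
    have hne : st.1 ≠ st.2 := fun h => ht (h ▸ hs)
    have hmem : ∀ (i j : Fin n) (h : i < j), (θ i ≠ η i ↔ θ j = η j) →
        (⟨(i, j), h⟩ : Edge n) ∈ changedE θ η := by
      intro i j h hc
      rw [mem_changedE]
      exact hc
    rcases lt_or_gt_of_ne hne with hlt | hgt
    · refine ⟨⟨(st.1, st.2), hlt⟩, ?_, ?_⟩
      · refine hmem _ _ _ ⟨fun _ => ?_, fun _ => (hmemS _).mp hs⟩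
        by_contra h2
        exact ht ((hmemS _).mpr h2)
      · simp only [if_pos hs]
    · refine ⟨⟨(st.2, st.1), hgt⟩, ?_, ?_⟩
      · refine hmem _ _ _ ⟨fun h2 => absurd ?_ h2, fun h3 => absurd h3 ((hmemS _).mp hs)⟩
        by_contra h3
        exact ht ((hmemS _).mpr h3)
      · have : st.2 ∉ S := ht
        simp only [if_neg this]

end Comb
section Post
variable {n : ℕ} {p q : ℝ}

lemma unifPrior_pos (n : ℕ) (η : Fin n → Bool) : 0 < unifPrior n η := by
  unfold unifPrior; positivity

lemma min1_le_sqrt {u : ℝ} (hu : 0 ≤ u) : min 1 u ≤ Real.sqrt u := by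
  rcases le_total u 1 with h | h
  · rw [min_eq_right h]
    nlinarith [Real.sq_sqrt hu, Real.sqrt_nonneg u, Real.sqrt_le_sqrt h, Real.sqrt_one]
  · rw [min_eq_left h]
    rw [show (1:ℝ) = Real.sqrt 1 from (Real.sqrt_one).symm]
    exact Real.sqrt_le_sqrt h

lemma denom_pos (hp : p ∈ Set.Ioo (0:ℝ) 1) (hq : q ∈ Set.Ioo (0:ℝ) 1)
    {θ : Fin n → Bool} (hθ : θ ∈ Theta n) (x : ObsGraph n) :
    0 < ∑ η ∈ Theta n, unifPrior n η * graphPMF p q η x := by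
  refine Finset.sum_pos' (fun η _ => ?_) ⟨θ, hθ, ?_⟩
  · exact mul_nonneg (unifPrior_pos n η).le
      (graphPMF_nonneg (Set.mem_Icc_of_Ioo hp) (Set.mem_Icc_of_Ioo hq) η x)
  · exact mul_pos (unifPrior_pos n θ) (graphPMF_pos hp hq θ x)

lemma expPostMass_nonneg (hp : p ∈ Set.Ioo (0:ℝ) 1) (hq : q ∈ Set.Ioo (0:ℝ) 1)
    {θ : Fin n → Bool} (hθ : θ ∈ Theta n) (A : Finset (Fin n → Bool))
    (hA : A ⊆ Theta n) : 0 ≤ expPostMass p q (unifPrior n) θ A := by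
  refine Finset.sum_nonneg fun x _ => mul_nonneg
    (graphPMF_nonneg (Set.mem_Icc_of_Ioo hp) (Set.mem_Icc_of_Ioo hq) θ x) ?_
  unfold postMass
  refine div_nonneg (Finset.sum_nonneg fun η _ => mul_nonneg (unifPrior_pos n η).le
    (graphPMF_nonneg (Set.mem_Icc_of_Ioo hp) (Set.mem_Icc_of_Ioo hq) η x))
    (denom_pos hp hq hθ x).le

lemma expPostMass_compl (hp : p ∈ Set.Ioo (0:ℝ) 1) (hq : q ∈ Set.Ioo (0:ℝ) 1)
    {θ : Fin n → Bool} (hθ : θ ∈ Theta n) (B : Finset (Fin n → Bool))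
    (hB : B ⊆ Theta n) :
    expPostMass p q (unifPrior n) θ B
      = 1 - expPostMass p q (unifPrior n) θ ((Theta n) \ B) := by
  have hsplit : ∀ x : ObsGraph n, postMass p q (unifPrior n) B x
      = 1 - postMass p q (unifPrior n) ((Theta n) \ B) x := by
    intro x
    unfold postMass
    have hD := denom_pos hp hq hθ x
    rw [eq_sub_iff_add_eq, ← add_div, div_eq_one_iff_eq hD.ne',
      ← Finset.sum_sdiff hB, add_comm]
  unfold expPostMass
  simp only [hsplit, mul_sub, mul_one, Finset.sum_sub_distrib, sum_graphPMF]

lemma expPostMass_le_sum_rho (hp : p ∈ Set.Ioo (0:ℝ) 1) (hq : q ∈ Set.Ioo (0:ℝ) 1)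
    {θ : Fin n → Bool} (hθ : θ ∈ Theta n) (A : Finset (Fin n → Bool))
    (hA : A ⊆ Theta n) :
    expPostMass p q (unifPrior n) θ A
      ≤ ∑ η ∈ A, rho p q ^ (changedE θ η).card := by
  have hp' := Set.mem_Icc_of_Ioo hp
  have hq' := Set.mem_Icc_of_Ioo hq
  unfold expPostMass postMass
  have step1 : ∀ x : ObsGraph n, graphPMF p q θ x *
      ((∑ η ∈ A, unifPrior n η * graphPMF p q η x)
        / (∑ η ∈ Theta n, unifPrior n η * graphPMF p q η x))
      = ∑ η ∈ A, graphPMF p q θ x *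
          ((unifPrior n η * graphPMF p q η x)
            / (∑ η' ∈ Theta n, unifPrior n η' * graphPMF p q η' x)) := by
    intro x
    rw [Finset.sum_div, Finset.mul_sum]
  simp only [step1]
  rw [Finset.sum_comm]
  refine Finset.sum_le_sum fun η hη => ?_
  rw [← hellinger_eq hp' hq' θ η]
  refine Finset.sum_le_sum fun x _ => ?_
  have hD := denom_pos hp hq hθ x
  have hθx := graphPMF_pos hp hq θ x
  have hηx := graphPMF_pos hp hq η x
  have hw : 0 ≤ unifPrior n η * graphPMF p q η x := mul_nonneg (unifPrior_pos n η).le hηx.le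
  have hratio : (unifPrior n η * graphPMF p q η x)
      / (∑ η' ∈ Theta n, unifPrior n η' * graphPMF p q η' x)
      ≤ min 1 (graphPMF p q η x / graphPMF p q θ x) := by
    refine le_min ?_ ?_
    · rw [div_le_one hD]
      exact Finset.single_le_sum (fun η' _ => mul_nonneg (unifPrior_pos n η').le
        (graphPMF_nonneg hp' hq' η' x)) (hA hη)
    · have h1 : (unifPrior n η * graphPMF p q η x)
          / (∑ η' ∈ Theta n, unifPrior n η' * graphPMF p q η' x)
          ≤ (unifPrior n η * graphPMF p q η x) / (unifPrior n θ * graphPMF p q θ x) := by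
        refine div_le_div_of_nonneg_left hw (mul_pos (unifPrior_pos n θ) hθx) ?_
        exact Finset.single_le_sum (fun η' _ => mul_nonneg (unifPrior_pos n η').le
          (graphPMF_nonneg hp' hq' η' x)) hθ
      refine h1.trans_eq ?_
      show (unifPrior n η * graphPMF p q η x) / (unifPrior n η * graphPMF p q θ x) = _
      rw [mul_div_mul_left _ _ (unifPrior_pos n η).ne']
  calc graphPMF p q θ x * ((unifPrior n η * graphPMF p q η x)
        / (∑ η' ∈ Theta n, unifPrior n η' * graphPMF p q η' x))
      ≤ graphPMF p q θ x * min 1 (graphPMF p q η x / graphPMF p q θ x) := by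
        exact mul_le_mul_of_nonneg_left hratio hθx.le
    _ ≤ graphPMF p q θ x * Real.sqrt (graphPMF p q η x / graphPMF p q θ x) := by
        exact mul_le_mul_of_nonneg_left (min1_le_sqrt (div_nonneg hηx.le hθx.le)) hθx.le
    _ = Real.sqrt (graphPMF p q θ x * graphPMF p q η x) := by
        rw [Real.sqrt_div hηx.le, Real.sqrt_mul hθx.le]
        rw [show graphPMF p q θ x * (Real.sqrt (graphPMF p q η x) / Real.sqrt (graphPMF p q θ x))
          = (graphPMF p q θ x / Real.sqrt (graphPMF p q θ x)) * Real.sqrt (graphPMF p q η x) by ring,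
          Real.div_sqrt]

end Post
section Count
variable {n : ℕ}

lemma hdist_le (η θ : Fin n → Bool) : hdist η θ ≤ n := by
  unfold hdist
  exact (Finset.card_filter_le _ _).trans (by simp)

lemma card_hdist_fiber (θ : Fin n → Bool) (k : ℕ) :
    (Finset.univ.filter fun η : Fin n → Bool => hdist η θ = k).card = n.choose k := by
  classical
  have hpc : (Finset.powersetCard k (Finset.univ : Finset (Fin n))).card = n.choose k := by
    rw [Finset.card_powersetCard, Finset.card_univ, Fintype.card_fin]
  rw [← hpc]
  apply Finset.card_bij (fun (η : Fin n → Bool) _ => Finset.univ.filter fun i => η i ≠ θ i)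
  · intro η hη
    rw [Finset.mem_filter] at hη
    rw [Finset.mem_powersetCard_univ]
    exact hη.2
  · intro η1 h1 η2 h2 heq
    funext i
    have := Finset.ext_iff.mp heq i
    simp only [Finset.mem_filter, Finset.mem_univ, true_and] at this
    cases hη1 : η1 i <;> cases hη2 : η2 i <;> cases hθ : θ i <;> simp_all
  · intro s hs
    rw [Finset.mem_powersetCard_univ] at hs
    refine ⟨fun i => if i ∈ s then !θ i else θ i, ?_, ?_⟩
    · rw [Finset.mem_filter]
      refine ⟨Finset.mem_univ _, ?_⟩
      rw [← hs]
      unfold hdist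
      congr 1
      ext i
      simp only [Finset.mem_filter, Finset.mem_univ, true_and]
      by_cases hi : i ∈ s <;> simp [hi]
    · ext i
      simp only [Finset.mem_filter, Finset.mem_univ, true_and]
      by_cases hi : i ∈ s <;> simp [hi]

lemma sum_fiber_hdist (θ : Fin n → Bool) (G : ℕ → ℝ) :
    ∑ η : Fin n → Bool, G (hdist η θ)
      = ∑ k ∈ Finset.range (n + 1), (n.choose k : ℝ) * G k := by
  classical
  rw [← Finset.sum_fiberwise_of_maps_to (g := fun η : Fin n → Bool => hdist η θ)
    (t := Finset.range (n + 1)) (fun η _ => Finset.mem_range.mpr (Nat.lt_succ_of_le (hdist_le η θ)))]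
  refine Finset.sum_congr rfl fun k _ => ?_
  rw [Finset.sum_congr rfl (fun η hη => by
    rw [(Finset.mem_filter.mp hη).2]), Finset.sum_const, card_hdist_fiber, nsmul_eq_mul]

end Count
section Analytic

lemma pow_self_div_factorial_le_exp (m : ℕ) :
    (m : ℝ) ^ m / (Nat.factorial m : ℝ) ≤ Real.exp m := by
  refine le_trans ?_ (Real.sum_le_exp_of_nonneg (Nat.cast_nonneg m) (m + 1))
  refine Finset.single_le_sum (f := fun i => (m:ℝ)^i / (Nat.factorial i : ℝ))
    (fun i _ => by positivity) (Finset.mem_range.mpr (Nat.lt_succ_self m))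

lemma term_bound (n k K : ℕ) (a B ρ : ℝ) (ha : 0 < a)
    (hρ0 : 0 ≤ ρ) (hρ : ρ ≤ Real.exp (-(B / (2 * n)))) (hB : 0 ≤ B)
    (hkn : k ≤ n) (hm : a * n < min k (n - k)) (hK : K < min k (n - k)) (hK0 : 0 < a * n) :
    (n.choose k : ℝ) * ρ ^ (k * (n - k))
      ≤ Real.exp (-(B / 4 - 1 + Real.log a)) ^ (min k (n - k)) := by
  set m := min k (n - k) with hmdef
  have hm1 : 1 ≤ m := by
    have h0 : (0:ℝ) < (m:ℝ) := lt_trans hK0 hm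
    have : 0 < m := by exact_mod_cast h0
    omega
  have hmn : 2 * m ≤ n := by omega
  have hn1 : 1 ≤ n := by omega
  have hchoose : n.choose k = n.choose m := by
    rcases Nat.le_or_le k (n - k) with h | h
    · have : m = k := by omega
      rw [this]
    · have : m = n - k := by omega
      rw [this, Nat.choose_symm hkn]
  have hprod : k * (n - k) = m * (n - m) := by
    rcases Nat.le_or_le k (n - k) with h | h
    · have : m = k := by omega
      rw [this]
    · have : m = n - k := by omega
      rw [this]
      have : n - (n - k) = k := by omega
      rw [this, Nat.mul_comm]
  -- bound on the choose
  have hchoose_bound : (n.choose k : ℝ) ≤ Real.exp (m * (1 - Real.log a)) := by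
    rw [hchoose]
    have h1 : (n.choose m : ℝ) ≤ (n:ℝ) ^ m / (Nat.factorial m : ℝ) :=
      Nat.choose_le_pow_div m n
    have hm0 : (0:ℝ) < m := by exact_mod_cast hm1
    have hsplit : (n:ℝ) ^ m / (Nat.factorial m : ℝ)
        = ((n:ℝ)/m) ^ m * ((m:ℝ) ^ m / (Nat.factorial m : ℝ)) := by
      rw [div_pow, div_mul_div_comm, div_eq_div_iff (by positivity) (by positivity)]
      ring
    have h2 : ((n:ℝ)/m) ^ m * ((m:ℝ) ^ m / (Nat.factorial m : ℝ))
        ≤ ((n:ℝ)/m) ^ m * Real.exp m := by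
      refine mul_le_mul_of_nonneg_left (pow_self_div_factorial_le_exp m) (by positivity)
    have hna : (n:ℝ)/m ≤ 1/a := by
      rw [div_le_div_iff₀ hm0 ha]
      nlinarith
    have h3 : ((n:ℝ)/m) ^ m ≤ (1/a) ^ m :=
      pow_le_pow_left₀ (by positivity) hna m
    have h4 : (1/a) ^ m * Real.exp m = Real.exp (m * (1 - Real.log a)) := by
      rw [show (1:ℝ)/a = Real.exp (-Real.log a) by
        rw [Real.exp_neg, Real.exp_log ha, one_div]]
      rw [← Real.exp_nat_mul, ← Real.exp_add]
      congr 1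
      ring
    calc (n.choose m : ℝ) ≤ (n:ℝ) ^ m / (Nat.factorial m : ℝ) := h1
      _ = ((n:ℝ)/m) ^ m * ((m:ℝ) ^ m / (Nat.factorial m : ℝ)) := hsplit
      _ ≤ ((n:ℝ)/m) ^ m * Real.exp m := h2
      _ ≤ (1/a) ^ m * Real.exp m := by
          refine mul_le_mul_of_nonneg_right h3 (Real.exp_nonneg _)
      _ = Real.exp (m * (1 - Real.log a)) := h4
  -- bound on rho power
  have hrho_bound : ρ ^ (k * (n - k)) ≤ Real.exp (-(m * (B / 4))) := by
    have h1 : ρ ^ (k * (n - k)) ≤ Real.exp (-(B / (2 * n))) ^ (k * (n - k)) :=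
      pow_le_pow_left₀ hρ0 hρ _
    rw [← Real.exp_nat_mul] at h1
    refine h1.trans (Real.exp_le_exp.mpr ?_)
    rw [hprod]
    have hcast : ((m * (n - m) : ℕ) : ℝ) = (m:ℝ) * ((n:ℝ) - m) := by
      push_cast [Nat.cast_sub (by omega : m ≤ n)]
      ring
    rw [hcast]
    have hn0 : (0:ℝ) < n := by exact_mod_cast hn1
    have hmn' : 2 * (m:ℝ) ≤ n := by exact_mod_cast hmn
    have hm0 : (0:ℝ) ≤ m := Nat.cast_nonneg m
    have h5 : (n:ℝ)/2 ≤ (n:ℝ) - m := by linarith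
    have h6 : (m:ℝ)*(B/4) = (m:ℝ)*((n:ℝ)/2)*(B/(2*n)) := by
      field_simp
      ring
    have h7 : (m:ℝ)*((n:ℝ)/2)*(B/(2*n)) ≤ (m:ℝ)*((n:ℝ)-m)*(B/(2*n)) := by
      refine mul_le_mul_of_nonneg_right (mul_le_mul_of_nonneg_left h5 hm0) (by positivity)
    nlinarith [h6, h7]
  calc (n.choose k : ℝ) * ρ ^ (k * (n - k))
      ≤ Real.exp (m * (1 - Real.log a)) * Real.exp (-(m * (B / 4))) := by
        refine mul_le_mul hchoose_bound hrho_bound (by positivity) (Real.exp_nonneg _)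
    _ = Real.exp (-(B / 4 - 1 + Real.log a)) ^ m := by
        rw [← Real.exp_add, ← Real.exp_nat_mul]
        congr 1
        ring

end Analytic
section Geom

lemma rho_le_exp {p q : ℝ} (hp : p ∈ Set.Icc (0:ℝ) 1) (hq : q ∈ Set.Icc (0:ℝ) 1) :
    rho p q ≤ Real.exp (-((Real.sqrt p - Real.sqrt q)^2/2)) := by
  have s1 := Real.sq_sqrt hp.1
  have s2 := Real.sq_sqrt hq.1
  have s3 := Real.sq_sqrt (by linarith [hp.2] : (0:ℝ) ≤ 1 - p)
  have s4 := Real.sq_sqrt (by linarith [hq.2] : (0:ℝ) ≤ 1 - q)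
  have e1 : rho p q = 1 - ((Real.sqrt p - Real.sqrt q)^2
      + (Real.sqrt (1-p) - Real.sqrt (1-q))^2)/2 := by
    unfold rho
    rw [Real.sqrt_mul hp.1, Real.sqrt_mul (by linarith [hp.2] : (0:ℝ) ≤ 1 - p)]
    nlinarith [s1, s2, s3, s4]
  have e2 : rho p q ≤ 1 - (Real.sqrt p - Real.sqrt q)^2/2 := by
    rw [e1]
    nlinarith [sq_nonneg (Real.sqrt (1-p) - Real.sqrt (1-q))]
  refine e2.trans ?_
  linarith [Real.add_one_le_exp (-((Real.sqrt p - Real.sqrt q)^2/2))]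

lemma geom_sum_le_two {r : ℝ} (hr0 : 0 ≤ r) (hr : r ≤ 1/2) (m : ℕ) :
    ∑ j ∈ Finset.range m, r ^ j ≤ 2 - 2 * r ^ m := by
  induction m with
  | zero => simp
  | succ m ih =>
    rw [Finset.sum_range_succ, pow_succ]
    nlinarith [pow_nonneg hr0 m]

lemma tail_sum_le (n K : ℕ) (r : ℝ) (hr0 : 0 ≤ r) (hr : r ≤ 1/2) :
    ∑ k ∈ Finset.range (n+1), (if K < k then r ^ k else 0) ≤ 2 * r ^ (K+1) := by
  rw [← Finset.sum_filter]
  have hfil : (Finset.range (n+1)).filter (fun k => K < k) = Finset.Ico (K+1) (n+1) := by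
    ext k
    simp only [Finset.mem_filter, Finset.mem_range, Finset.mem_Ico]
    omega
  rw [hfil, Finset.sum_Ico_eq_sum_range]
  calc ∑ i ∈ Finset.range (n + 1 - (K+1)), r ^ (K + 1 + i)
      = r ^ (K+1) * ∑ i ∈ Finset.range (n + 1 - (K+1)), r ^ i := by
        rw [Finset.mul_sum]
        exact Finset.sum_congr rfl fun i _ => by rw [pow_add]
    _ ≤ r ^ (K+1) * 2 := by
        refine mul_le_mul_of_nonneg_left ?_ (pow_nonneg hr0 _)
        refine (geom_sum_le_two hr0 hr _).trans ?_
        nlinarith [pow_nonneg hr0 (n + 1 - (K+1))]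
    _ = 2 * r ^ (K+1) := by ring

end Geom
section Main
variable {n : ℕ}

lemma hdist_comm (θ η : Fin n → Bool) : hdist θ η = hdist η θ := by
  unfold hdist
  congr 1
  ext i
  simp [ne_comm]

lemma sqrt_sub_sq_div {c d : ℝ} (hc : 0 ≤ c) (hd : 0 ≤ d) {n : ℕ} (hn : 0 < n) :
    (Real.sqrt (c / n) - Real.sqrt (d / n))^2
      = (Real.sqrt c - Real.sqrt d)^2 / n := by
  have hn0 : (0:ℝ) < n := by exact_mod_cast hn
  rw [Real.sqrt_div hc, Real.sqrt_div hd]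
  have hsn : Real.sqrt n ≠ 0 := (Real.sqrt_pos.mpr hn0).ne'
  have hsq : Real.sqrt (n:ℝ) ^ 2 = (n:ℝ) := Real.sq_sqrt hn0.le
  rw [div_sub_div_same, div_pow, hsq]

end Main
lemma key_bound (nn : ℕ) (hn2 : 2 ≤ nn) (cc dd aa : ℝ)
    (hcc : 0 ≤ cc) (hdd : 0 ≤ dd)
    (hp : cc/nn ∈ Set.Ioo (0:ℝ) 1) (hq : dd/nn ∈ Set.Ioo (0:ℝ) 1)
    (θ : Fin nn → Bool) (hθ : θ ∈ Theta nn) (haa : 0 < aa) (han1 : 1 ≤ aa * nn)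
    (ht1 : 1 ≤ (Real.sqrt cc - Real.sqrt dd)^2/4 - 1 + Real.log aa) :
    expPostMass (cc/nn) (dd/nn) (unifPrior nn) θ (Theta nn \ hball θ ⌈aa*nn⌉₊)
      ≤ 4 * Real.exp (-((Real.sqrt cc - Real.sqrt dd)^2/4 - 1 + Real.log aa)) := by
  set B : ℝ := (Real.sqrt cc - Real.sqrt dd)^2 with hBdef
  set t : ℝ := B/4 - 1 + Real.log aa with htdef
  set r : ℝ := Real.exp (-t) with hrdef
  set K : ℕ := ⌈aa * nn⌉₊ with hKdef
  have hp' := Set.mem_Icc_of_Ioo hp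
  have hq' := Set.mem_Icc_of_Ioo hq
  have hB0 : 0 ≤ B := sq_nonneg _
  have hr0 : 0 ≤ r := Real.exp_nonneg _
  have hr12 : r ≤ 1/2 := by
    rw [hrdef]
    have h1 : Real.exp (-t) ≤ Real.exp (-1) := Real.exp_le_exp.mpr (by linarith)
    refine h1.trans ?_
    rw [Real.exp_neg]
    rw [inv_le_comm₀ (Real.exp_pos 1) (by norm_num)]
    linarith [Real.add_one_le_exp (1:ℝ)]
  have hr1 : r ≤ 1 := by linarith
  -- rho bound
  have hrho : rho (cc/nn) (dd/nn) ≤ Real.exp (-(B / (2 * nn))) := by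
    refine (rho_le_exp hp' hq').trans (Real.exp_le_exp.mpr ?_)
    rw [sqrt_sub_sq_div hcc hdd (by omega)]
    rw [div_div]
    rw [mul_comm (nn:ℝ) 2]
  have hrho0 : 0 ≤ rho (cc/nn) (dd/nn) := rho_nonneg _ _
  -- the chain
  have hsub : hball θ K ⊆ Theta nn := Finset.filter_subset _ _
  set F : ℕ → ℝ := fun k => if K < min k (nn - k)
    then rho (cc/nn) (dd/nn) ^ (k * (nn - k)) else 0 with hFdef
  have hF0 : ∀ k, 0 ≤ F k := by
    intro k
    rw [hFdef]
    dsimp only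
    split
    · exact pow_nonneg hrho0 _
    · exact le_refl 0
  calc expPostMass (cc/nn) (dd/nn) (unifPrior nn) θ (Theta nn \ hball θ K)
      ≤ ∑ η ∈ Theta nn \ hball θ K, rho (cc/nn) (dd/nn) ^ (changedE θ η).card :=
        expPostMass_le_sum_rho hp hq hθ _ (Finset.sdiff_subset)
    _ ≤ ∑ η ∈ Finset.univ.filter (fun η : Fin nn → Bool => K < kdist η θ),
          rho (cc/nn) (dd/nn) ^ (changedE θ η).card := by
        refine Finset.sum_le_sum_of_subset_of_nonneg ?_ (fun η _ _ => pow_nonneg hrho0 _)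
        intro η hη
        rw [Finset.mem_sdiff] at hη
        rw [Finset.mem_filter]
        refine ⟨Finset.mem_univ _, ?_⟩
        by_contra h
        push_neg at h
        exact hη.2 (Finset.mem_filter.mpr ⟨hη.1, h⟩)
    _ = ∑ η ∈ Finset.univ.filter (fun η : Fin nn → Bool => K < kdist η θ),
          F (hdist η θ) := by
        refine Finset.sum_congr rfl fun η hη => ?_
        rw [Finset.mem_filter] at hη
        rw [card_changedE, hdist_comm θ η, hFdef]
        dsimp only
        have hcnd : K < min (hdist η θ) (nn - hdist η θ) := hη.2
        rw [if_pos hcnd]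
    _ ≤ ∑ η : Fin nn → Bool, F (hdist η θ) := by
        refine Finset.sum_le_sum_of_subset_of_nonneg (Finset.filter_subset _ _)
          (fun η _ _ => hF0 _)
    _ = ∑ k ∈ Finset.range (nn + 1), (nn.choose k : ℝ) * F k := sum_fiber_hdist θ F
    _ ≤ ∑ k ∈ Finset.range (nn + 1),
          ((if K < k then r ^ k else 0) + (if K < nn - k then r ^ (nn - k) else 0)) := by
        refine Finset.sum_le_sum fun k hk => ?_
        have hkn : k ≤ nn := by
          rw [Finset.mem_range] at hk
          omega
        rw [hFdef]
        dsimp only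
        by_cases hcond : K < min k (nn - k)
        · rw [if_pos hcond]
          have hterm : (nn.choose k : ℝ) * rho (cc/nn) (dd/nn) ^ (k * (nn - k))
              ≤ r ^ (min k (nn - k)) := by
            rw [hrdef, htdef, hBdef]
            refine term_bound nn k K aa ((Real.sqrt cc - Real.sqrt dd)^2)
              (rho (cc/nn) (dd/nn)) haa hrho0 ?_ hB0 hkn ?_ hcond ?_
            · rw [← hBdef]
              exact hrho
            · have h1 : (K:ℝ) < (min k (nn - k) : ℕ) := by exact_mod_cast hcond
              have h2 : aa * nn ≤ K := Nat.le_ceil _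
              push_cast at h1 ⊢
              linarith
            · linarith
          refine hterm.trans ?_
          rcases Nat.le_or_le k (nn - k) with h | h
          · have : min k (nn - k) = k := by omega
            rw [this]
            have hpos : (0:ℝ) ≤ if K < nn - k then r ^ (nn - k) else 0 := by
              split
              · exact pow_nonneg hr0 _
              · exact le_refl 0
            rw [if_pos (by omega : K < k)]
            linarith
          · have : min k (nn - k) = nn - k := by omega
            rw [this]
            have hpos : (0:ℝ) ≤ if K < k then r ^ k else 0 := by
              split
              · exact pow_nonneg hr0 _
              · exact le_refl 0
            rw [if_pos (by omega : K < nn - k)]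
            linarith
        · rw [if_neg hcond, mul_zero]
          have hpos1 : (0:ℝ) ≤ if K < k then r ^ k else 0 := by
            split
            · exact pow_nonneg hr0 _
            · exact le_refl 0
          have hpos2 : (0:ℝ) ≤ if K < nn - k then r ^ (nn - k) else 0 := by
            split
            · exact pow_nonneg hr0 _
            · exact le_refl 0
          linarith
    _ = (∑ k ∈ Finset.range (nn + 1), (if K < k then r ^ k else 0))
        + ∑ k ∈ Finset.range (nn + 1), (if K < nn - k then r ^ (nn - k) else 0) :=
        Finset.sum_add_distrib
    _ = 2 * ∑ k ∈ Finset.range (nn + 1), (if K < k then r ^ k else 0) := by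
        have hrefl : ∑ k ∈ Finset.range (nn + 1), (if K < nn - k then r ^ (nn - k) else 0)
            = ∑ k ∈ Finset.range (nn + 1), (if K < k then r ^ k else 0) := by
          have := Finset.sum_range_reflect (fun k => if K < k then r ^ k else 0) (nn + 1)
          rw [← this]
          refine Finset.sum_congr rfl fun k hk => ?_
          rw [Finset.mem_range] at hk
          have : nn + 1 - 1 - k = nn - k := by omega
          rw [this]
        rw [hrefl]
        ring
    _ ≤ 2 * (2 * r ^ (K + 1)) := by
        have := tail_sum_le nn K r hr0 hr12
        linarith
    _ ≤ 4 * Real.exp (-t) := by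
        have hKpow : r ^ (K + 1) ≤ r ^ 1 :=
          pow_le_pow_of_le_one hr0 hr1 (by omega)
        rw [pow_one] at hKpow
        rw [hrdef] at hKpow
        linarith

/-- if `a_n → 0`, `a_n n → ∞` and `(√c_n − √d_n)² + 4C log a_n → ∞`
for some `C > 1`, then the posterior recovers the community assignments
almost-exactly with error rate `⌈a_n n⌉`. -/
theorem stmt14 (c d : ℕ → ℝ) (hc0 : ∀ n, 2 ≤ n → 0 < c n) (hd0 : ∀ n, 2 ≤ n → 0 < d n)
    (hco : c =o[Filter.atTop] fun n : ℕ => Real.log n)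
    (hdo : d =o[Filter.atTop] fun n : ℕ => Real.log n)
    (hp : ∀ n, 2 ≤ n → c n / n ∈ Set.Ioo (0:ℝ) 1)
    (hq : ∀ n, 2 ≤ n → d n / n ∈ Set.Ioo (0:ℝ) 1)
    (θ : (n : ℕ) → Fin n → Bool) (hθ : ∀ n, 2 ≤ n → θ n ∈ Theta n)
    (a : ℕ → ℝ) (ha : ∀ n, a n ∈ Set.Ioo (0:ℝ) (1/2))
    (ha0 : Filter.Tendsto a Filter.atTop (nhds 0))
    (han : Filter.Tendsto (fun n : ℕ => a n * n) Filter.atTop Filter.atTop)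
    (hcond : ∃ C : ℝ, 1 < C ∧ Filter.Tendsto
      (fun n : ℕ => (Real.sqrt (c n) - Real.sqrt (d n))^2 + 4 * C * Real.log (a n))
      Filter.atTop Filter.atTop) :
    Filter.Tendsto (fun n : ℕ =>
        expPostMass (c n / n) (d n / n) (unifPrior n) (θ n)
          (hball (θ n) ⌈a n * n⌉₊))
      Filter.atTop (nhds 1) := by
  classical
  obtain ⟨C, hC1, hCt⟩ := hcond
  set t : ℕ → ℝ := fun n => (Real.sqrt (c n) - Real.sqrt (d n))^2/4 - 1 + Real.log (a n)
    with htdef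
  -- t tends to infinity
  have hlog : Filter.Tendsto (fun n => Real.log (a n)) Filter.atTop Filter.atBot := by
    refine Real.tendsto_log_nhdsGT_zero.comp ?_
    exact tendsto_nhdsWithin_of_tendsto_nhds_of_eventually_within a ha0
      (Filter.Eventually.of_forall fun n => (ha n).1)
  have hneg : Filter.Tendsto (fun n => -Real.log (a n)) Filter.atTop Filter.atTop :=
    tendsto_neg_atBot_atTop.comp hlog
  have ht : Filter.Tendsto t Filter.atTop Filter.atTop := by
    have h1 : Filter.Tendsto
        (fun n => (1/4) * ((Real.sqrt (c n) - Real.sqrt (d n))^2 + 4 * C * Real.log (a n))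
          + (C - 1) * (-Real.log (a n)) + (-1)) Filter.atTop Filter.atTop := by
      refine Filter.tendsto_atTop_add_const_right _ (-1) ?_
      exact Filter.Tendsto.atTop_add_atTop (hCt.const_mul_atTop (by norm_num))
        (hneg.const_mul_atTop (by linarith))
    refine h1.congr fun n => ?_
    rw [htdef]
    ring
  -- the complement expectation
  set E : ℕ → ℝ := fun n => expPostMass (c n / n) (d n / n) (unifPrior n) (θ n)
    (Theta n \ hball (θ n) ⌈a n * n⌉₊) with hEdef
  have hEtends : Filter.Tendsto E Filter.atTop (nhds 0) := by
    have hbound : Filter.Tendsto (fun n => 4 * Real.exp (-(t n))) Filter.atTop (nhds 0) := by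
      have h2 : Filter.Tendsto (fun n => Real.exp (-(t n))) Filter.atTop (nhds 0) :=
        Real.tendsto_exp_atBot.comp (tendsto_neg_atTop_atBot.comp ht)
      simpa using h2.const_mul 4
    refine tendsto_of_tendsto_of_tendsto_of_le_of_le' tendsto_const_nhds hbound ?_ ?_
    · filter_upwards [Filter.eventually_ge_atTop 2] with n hn2
      exact expPostMass_nonneg (hp n hn2) (hq n hn2) (hθ n hn2) _ Finset.sdiff_subset
    · filter_upwards [Filter.eventually_ge_atTop 2, ht.eventually_ge_atTop 1,
        han.eventually_ge_atTop 1] with n hn2 ht1 han1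
      exact key_bound n hn2 (c n) (d n) (a n) (hc0 n hn2).le (hd0 n hn2).le
        (hp n hn2) (hq n hn2) (θ n) (hθ n hn2) (ha n).1 han1 ht1
  have heq : (fun n => 1 - E n) =ᶠ[Filter.atTop]
      (fun n : ℕ => expPostMass (c n / n) (d n / n) (unifPrior n) (θ n)
        (hball (θ n) ⌈a n * n⌉₊)) := by
    filter_upwards [Filter.eventually_ge_atTop 2] with n hn2
    rw [hEdef]
    dsimp only
    exact (expPostMass_compl (hp n hn2) (hq n hn2) (hθ n hn2)
      (hball (θ n) ⌈a n * n⌉₊)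
      (show hball (θ n) ⌈a n * n⌉₊ ⊆ Theta n from Finset.filter_subset _ _)).symm
  refine Filter.Tendsto.congr' heq ?_
  have h1 : Filter.Tendsto (fun _ : ℕ => (1:ℝ)) Filter.atTop (nhds 1) := tendsto_const_nhds
  simpa using h1.sub hEtends
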